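/- arXiv:1904.00725 — 5 statements merged into one kernel-verified Lean document; each statement's English description precedes it below -/
import Mathlib

section
/- Let σ be a permutation of {1,…,n} with #(σ) = k cycles, let i₁,…,i_k be distinct elements of {1,…,n}, and let ρ = σ∘(i₁,i₂)∘(i₁,i₃)∘…∘(i₁,i_k) (composition with the transpositions (i₁,i_j) for 2 ≤ j ≤ k). Then |ℓ(ρ) − ℓ(σ)| ≤ #(σ). -/
/-- Length of the longest increasing subsequence of a permutation of `{1,…,n}`. -/
noncomputable def lisLen {n : ℕ} (σ : Equiv.Perm (Fin n)) : ℕ :=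
  sSup {k : ℕ | ∃ f : Fin k → Fin n, StrictMono f ∧ StrictMono fun l => σ (f l)}

/-- The number of cycles of a permutation, counting fixed points as cycles of length 1. -/
def numCycles {n : ℕ} (σ : Equiv.Perm (Fin n)) : ℕ :=
  σ.cycleType.card + (Finset.univ.filter fun x => σ x = x).card

lemma lisSet_bddAbove {n : ℕ} (σ : Equiv.Perm (Fin n)) :
    BddAbove {k : ℕ | ∃ f : Fin k → Fin n, StrictMono f ∧ StrictMono fun l => σ (f l)} := by
  refine ⟨n, fun m hm => ?_⟩
  obtain ⟨f, hf, -⟩ := hm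
  simpa using Fintype.card_le_of_injective f hf.injective

lemma list_prod_apply_fixed {α : Type*} [DecidableEq α] (l : List (Equiv.Perm α)) (x : α)
    (h : ∀ g ∈ l, g x = x) : l.prod x = x := by
  induction l with
  | nil => rfl
  | cons a t ih =>
    rw [List.prod_cons, Equiv.Perm.mul_apply, ih (fun g hg => h g (List.mem_cons_of_mem _ hg)),
      h a List.mem_cons_self]

lemma lisLen_le_mul_add {n : ℕ} (σ π : Equiv.Perm (Fin n)) :
    lisLen σ ≤ lisLen (σ * π) + π.support.card := by
  apply csSup_le
  · exact ⟨0, Fin.elim0, fun a => a.elim0, fun a => a.elim0⟩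
  rintro m ⟨f, hf, hsf⟩
  classical
  set s : Finset (Fin m) := Finset.univ.filter (fun l => f l ∉ π.support) with hs
  have h1 : (Finset.univ.filter (fun l => f l ∈ π.support)).card ≤ π.support.card :=
    Finset.card_le_card_of_injOn f (fun x hx => by simpa using hx) (fun a _ b _ h => hf.injective h)
  have h2 : (Finset.univ.filter (fun l => f l ∈ π.support)).card + s.card = m := by
    rw [hs, Finset.card_filter_add_card_filter_not]
    simp
  have hfix : ∀ l : Fin s.card, π (f (s.orderEmbOfFin rfl l)) = f (s.orderEmbOfFin rfl l) := by
    intro l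
    have hmem := s.orderEmbOfFin_mem rfl l
    exact Equiv.Perm.notMem_support.mp (Finset.mem_filter.mp hmem).2
  have hmem : s.card ∈ {k : ℕ | ∃ f : Fin k → Fin n, StrictMono f ∧
      StrictMono fun l => (σ * π) (f l)} := by
    refine ⟨f ∘ s.orderEmbOfFin rfl, hf.comp (s.orderEmbOfFin rfl).strictMono, ?_⟩
    intro a b hab
    simp only [Function.comp_apply, Equiv.Perm.mul_apply, hfix]
    exact hsf ((s.orderEmbOfFin rfl).strictMono hab)
  have hle : s.card ≤ lisLen (σ * π) := le_csSup (lisSet_bddAbove (σ * π)) hmem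
  omega

/-- Let `σ` be a permutation of `{1,…,n}` with `k = #(σ)` cycles, `i₁,…,i_k` distinct
elements, and `ρ = σ∘(i₁,i₂)∘(i₁,i₃)∘…∘(i₁,i_k)`. Then `|ℓ(ρ) − ℓ(σ)| ≤ #(σ)`. -/
theorem abs_lis_sub_lis_merge_le_numCycles
    (n : ℕ) (σ : Equiv.Perm (Fin n))
    (i : Fin (numCycles σ) → Fin n) (hi : Function.Injective i)
    (hk : 0 < numCycles σ)
    (ρ : Equiv.Perm (Fin n))
    (hρ : ρ = σ * (((List.finRange (numCycles σ)).drop 1).map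
      fun j => Equiv.swap (i ⟨0, hk⟩) (i j)).prod) :
    |(lisLen ρ : ℤ) - (lisLen σ : ℤ)| ≤ (numCycles σ : ℤ) := by
  classical
  set π : Equiv.Perm (Fin n) := (((List.finRange (numCycles σ)).drop 1).map
      fun j => Equiv.swap (i ⟨0, hk⟩) (i j)).prod with hπ
  have hπfix : ∀ x : Fin n, (∀ j, x ≠ i j) → π x = x := by
    intro x hx
    apply list_prod_apply_fixed
    intro g hg
    rw [List.mem_map] at hg
    obtain ⟨j, -, rfl⟩ := hg
    exact Equiv.swap_apply_of_ne_of_ne (hx _) (hx _)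
  have hsupp : π.support ⊆ Finset.univ.image i := by
    intro x hx
    by_contra h
    simp only [Finset.mem_image, Finset.mem_univ, true_and, not_exists] at h
    exact (Equiv.Perm.mem_support.mp hx) (hπfix x fun j hj => h j hj.symm)
  have hcard : π.support.card ≤ numCycles σ := by
    calc π.support.card ≤ (Finset.univ.image i).card := Finset.card_le_card hsupp
    _ ≤ numCycles σ := by
        rw [Finset.card_image_of_injective _ hi]; simp
  have h1 : lisLen σ ≤ lisLen ρ + numCycles σ := by
    rw [hρ]
    exact (lisLen_le_mul_add σ π).trans (by omega)
  have h2 : lisLen ρ ≤ lisLen σ + numCycles σ := by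
    have hσ : ρ * π⁻¹ = σ := by rw [hρ]; group
    have := lisLen_le_mul_add ρ π⁻¹
    rw [hσ, Equiv.Perm.support_inv] at this
    omega
  rw [abs_sub_le_iff]
  omega
end

section
/- Let σ be a permutation of {1,…,n} with #(σ) = k cycles, let i₁,…,i_k be distinct elements of {1,…,n}, and let ρ = σ∘(i₁,i₂)∘(i₁,i₃)∘…∘(i₁,i_k). Then for every l ≥ 1, |G_l(σ) − G_l(ρ)| ≤ #(σ). -/
/-- `greene σ l` is the maximum cardinality of a subset of `{1,…,n}` that is a union of `l`
subsets on each of which `σ` is increasing. By Greene's theorem it equals the sum of the first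
`l` rows of the Robinson–Schensted shape of `σ`. -/
noncomputable def greene {n : ℕ} (σ : Equiv.Perm (Fin n)) (l : ℕ) : ℕ :=
  sSup {k : ℕ | ∃ t : Fin l → Finset (Fin n),
    (∀ m : Fin l, ∀ i ∈ t m, ∀ j ∈ t m, i < j → σ i < σ j) ∧
    (Finset.univ.biUnion t).card = k}

lemma list_prod_apply_of_fixes {α : Type*} (L : List (Equiv.Perm α)) (x : α)
    (h : ∀ p ∈ L, p x = x) : L.prod x = x := by
  induction L with
  | nil => rfl
  | cons p L ih =>
    rw [List.prod_cons, Equiv.Perm.mul_apply,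
      ih (fun q hq => h q (List.mem_cons_of_mem _ hq)), h p List.mem_cons_self]

lemma greene_set_nonempty {n : ℕ} (σ : Equiv.Perm (Fin n)) (l : ℕ) :
    {k : ℕ | ∃ t : Fin l → Finset (Fin n),
      (∀ m : Fin l, ∀ i ∈ t m, ∀ j ∈ t m, i < j → σ i < σ j) ∧
      (Finset.univ.biUnion t).card = k}.Nonempty := by
  exact ⟨_, fun _ => ∅, fun m i hi => absurd hi (Finset.notMem_empty i), rfl⟩

lemma greene_set_bdd {n : ℕ} (σ : Equiv.Perm (Fin n)) (l : ℕ) :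
    BddAbove {k : ℕ | ∃ t : Fin l → Finset (Fin n),
      (∀ m : Fin l, ∀ i ∈ t m, ∀ j ∈ t m, i < j → σ i < σ j) ∧
      (Finset.univ.biUnion t).card = k} := by
  refine ⟨n, fun k hk => ?_⟩
  obtain ⟨t, -, ht⟩ := hk
  rw [← ht]
  simpa using Finset.card_le_card (Finset.subset_univ (Finset.univ.biUnion t))

lemma greene_le_of_agree {n : ℕ} (σ ρ : Equiv.Perm (Fin n)) (S : Finset (Fin n))
    (hagree : ∀ x ∉ S, σ x = ρ x) (l : ℕ) :
    greene σ l ≤ greene ρ l + S.card := by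
  have hmem := Nat.sSup_mem (greene_set_nonempty σ l) (greene_set_bdd σ l)
  obtain ⟨t, ht, htc⟩ := hmem
  set t' : Fin l → Finset (Fin n) := fun m => t m \ S with ht'def
  have hmem' : (Finset.univ.biUnion t').card ∈ {k : ℕ | ∃ t : Fin l → Finset (Fin n),
      (∀ m : Fin l, ∀ i ∈ t m, ∀ j ∈ t m, i < j → ρ i < ρ j) ∧
      (Finset.univ.biUnion t).card = k} := by
    refine ⟨t', fun m a ha b hb hab => ?_, rfl⟩
    simp only [ht'def, Finset.mem_sdiff] at ha hb
    rw [← hagree a ha.2, ← hagree b hb.2]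
    exact ht m a ha.1 b hb.1 hab
  have h1 : (Finset.univ.biUnion t').card ≤ greene ρ l :=
    le_csSup (greene_set_bdd ρ l) hmem'
  have hsub : Finset.univ.biUnion t \ S ⊆ Finset.univ.biUnion t' := by
    intro x hx
    rw [Finset.mem_sdiff, Finset.mem_biUnion] at hx
    obtain ⟨⟨m, -, hm⟩, hxS⟩ := hx
    exact Finset.mem_biUnion.2 ⟨m, Finset.mem_univ m,
      Finset.mem_sdiff.2 ⟨hm, hxS⟩⟩
  have h2 : (Finset.univ.biUnion t).card ≤ (Finset.univ.biUnion t').card + S.card := by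
    calc (Finset.univ.biUnion t).card
        ≤ (Finset.univ.biUnion t ∪ S).card := Finset.card_le_card Finset.subset_union_left
      _ = (Finset.univ.biUnion t \ S).card + S.card := (Finset.card_sdiff_add_card _ _).symm
      _ ≤ (Finset.univ.biUnion t').card + S.card := by
          exact Nat.add_le_add_right (Finset.card_le_card hsub) _
  have hg : greene σ l = (Finset.univ.biUnion t).card := htc.symm
  rw [hg]
  exact h2.trans (Nat.add_le_add_right h1 _)

/-- Let `σ` be a permutation of `{1,…,n}` with `k = #(σ)` cycles, `i₁,…,i_k` distinct
elements, and `ρ = σ∘(i₁,i₂)∘(i₁,i₃)∘…∘(i₁,i_k)`. Then for every `l ≥ 1`,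
`|G_l(σ) − G_l(ρ)| ≤ #(σ)`. -/
theorem abs_greene_sub_greene_merge_le_numCycles
    (n : ℕ) (σ : Equiv.Perm (Fin n))
    (i : Fin (numCycles σ) → Fin n) (hi : Function.Injective i)
    (hk : 0 < numCycles σ)
    (ρ : Equiv.Perm (Fin n))
    (hρ : ρ = σ * (((List.finRange (numCycles σ)).drop 1).map
      fun j => Equiv.swap (i ⟨0, hk⟩) (i j)).prod)
    (l : ℕ) (hl : 1 ≤ l) :
    |(greene σ l : ℤ) - (greene ρ l : ℤ)| ≤ (numCycles σ : ℤ) := by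
  set S : Finset (Fin n) := Finset.univ.image i with hS
  have hScard : S.card = numCycles σ := by
    rw [hS, Finset.card_image_of_injective _ hi, Finset.card_univ, Fintype.card_fin]
  have hagree : ∀ x ∉ S, σ x = ρ x := by
    intro x hx
    have hxfix : ∀ p ∈ ((List.finRange (numCycles σ)).drop 1).map
        (fun j => Equiv.swap (i ⟨0, hk⟩) (i j)), p x = x := by
      intro p hp
      rw [List.mem_map] at hp
      obtain ⟨j, -, rfl⟩ := hp
      apply Equiv.swap_apply_of_ne_of_ne
      · intro h; exact hx (hS ▸ Finset.mem_image.2 ⟨⟨0, hk⟩, Finset.mem_univ _, h.symm⟩)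
      · intro h; exact hx (hS ▸ Finset.mem_image.2 ⟨j, Finset.mem_univ _, h.symm⟩)
    rw [hρ, Equiv.Perm.mul_apply, list_prod_apply_of_fixes _ _ hxfix]
  have h1 : greene σ l ≤ greene ρ l + numCycles σ := by
    rw [← hScard]; exact greene_le_of_agree σ ρ S hagree l
  have h2 : greene ρ l ≤ greene σ l + numCycles σ := by
    rw [← hScard]; exact greene_le_of_agree ρ σ S (fun x hx => (hagree x hx).symm) l
  rw [abs_sub_le_iff]
  constructor <;> [exact_mod_cast (by omega : (greene σ l : ℤ) - greene ρ l ≤ numCycles σ);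
    exact_mod_cast (by omega : (greene ρ l : ℤ) - greene σ l ≤ numCycles σ)]
end

section
/- Let σ₁, σ₂ be permutations of {1,…,n}, let #(σ₁) = k, let i₁,…,i_k be distinct elements of {1,…,n}, and let ρ = σ₁∘(i₁,i₂)∘(i₁,i₃)∘…∘(i₁,i_k). Then |LCS(σ₁,σ₂) − LCS(ρ,σ₂)| ≤ #(σ₁). -/
/-- Length of the longest common subsequence of two permutations of `{1,…,n}`. -/
noncomputable def lcsLen {n : ℕ} (σ₁ σ₂ : Equiv.Perm (Fin n)) : ℕ :=
  sSup {k : ℕ | ∃ f g : Fin k → Fin n, StrictMono f ∧ StrictMono g ∧ ∀ l, σ₁ (f l) = σ₂ (g l)}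

lemma lcs_nonempty {n : ℕ} (σ₁ σ₂ : Equiv.Perm (Fin n)) :
    Set.Nonempty {k : ℕ | ∃ f g : Fin k → Fin n, StrictMono f ∧ StrictMono g ∧ ∀ l, σ₁ (f l) = σ₂ (g l)} :=
  ⟨0, fun l => l.elim0, fun l => l.elim0, fun a => a.elim0, fun a => a.elim0, fun a => a.elim0⟩

lemma lcs_bdd {n : ℕ} (σ₁ σ₂ : Equiv.Perm (Fin n)) :
    BddAbove {k : ℕ | ∃ f g : Fin k → Fin n, StrictMono f ∧ StrictMono g ∧ ∀ l, σ₁ (f l) = σ₂ (g l)} := by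
  refine ⟨n, fun k hk => ?_⟩
  obtain ⟨f, g, hf, hg, h⟩ := hk
  simpa using Fintype.card_le_of_injective f hf.injective

lemma lcs_le {n : ℕ} (σ₁ ρ σ₂ : Equiv.Perm (Fin n)) (D : Finset (Fin n))
    (hD : ∀ x ∉ D, σ₁ x = ρ x) : lcsLen σ₁ σ₂ ≤ lcsLen ρ σ₂ + D.card := by
  refine csSup_le (lcs_nonempty σ₁ σ₂) ?_
  rintro L ⟨f, g, hf, hg, h⟩
  set S : Finset (Fin L) := Finset.univ.filter (fun l => f l ∉ D) with hS
  have hcard : S.card + (Finset.univ.filter (fun l => ¬ f l ∉ D)).card = L := by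
    simpa using Finset.card_filter_add_card_filter_not (s := (Finset.univ : Finset (Fin L)))
      (p := fun l => f l ∉ D)
  have hbad : (Finset.univ.filter (fun l => ¬ f l ∉ D)).card ≤ D.card := by
    apply Finset.card_le_card_of_injOn f
    · intro l hl
      simpa using (Finset.mem_filter.mp hl).2
    · exact fun a _ b _ hab => hf.injective hab
  have hmem : S.card ∈ {k : ℕ | ∃ f g : Fin k → Fin n, StrictMono f ∧ StrictMono g ∧ ∀ l, ρ (f l) = σ₂ (g l)} := by
    refine ⟨f ∘ S.orderEmbOfFin rfl, g ∘ S.orderEmbOfFin rfl,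
      hf.comp (S.orderEmbOfFin rfl).strictMono, hg.comp (S.orderEmbOfFin rfl).strictMono, fun l => ?_⟩
    have hmem' : (S.orderEmbOfFin rfl) l ∈ S := S.orderEmbOfFin_mem rfl l
    have : f ((S.orderEmbOfFin rfl) l) ∉ D := (Finset.mem_filter.mp hmem').2
    simp only [Function.comp_apply, ← hD _ this]
    exact h _
  have hle : S.card ≤ lcsLen ρ σ₂ := le_csSup (lcs_bdd ρ σ₂) hmem
  omega

/-- Let `σ₁, σ₂` be permutations of `{1,…,n}`, `k = #(σ₁)`, `i₁,…,i_k` distinct elements,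
and `ρ = σ₁∘(i₁,i₂)∘(i₁,i₃)∘…∘(i₁,i_k)`. Then `|LCS(σ₁,σ₂) − LCS(ρ,σ₂)| ≤ #(σ₁)`. -/
theorem abs_lcs_sub_lcs_merge_le_numCycles
    (n : ℕ) (σ₁ σ₂ : Equiv.Perm (Fin n))
    (i : Fin (numCycles σ₁) → Fin n) (hi : Function.Injective i)
    (hk : 0 < numCycles σ₁)
    (ρ : Equiv.Perm (Fin n))
    (hρ : ρ = σ₁ * (((List.finRange (numCycles σ₁)).drop 1).map
      fun j => Equiv.swap (i ⟨0, hk⟩) (i j)).prod) :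
    |(lcsLen σ₁ σ₂ : ℤ) - (lcsLen ρ σ₂ : ℤ)| ≤ (numCycles σ₁ : ℤ) := by
  set D : Finset (Fin n) := Finset.univ.image i with hDdef
  have hDcard : D.card = numCycles σ₁ := by
    rw [hDdef, Finset.card_image_of_injective _ hi, Finset.card_univ, Fintype.card_fin]
  have hfix : ∀ x ∉ D, σ₁ x = ρ x := by
    intro x hx
    have hx' : ∀ j, x ≠ i j := by
      intro j hj
      exact hx (Finset.mem_image.mpr ⟨j, Finset.mem_univ j, hj.symm⟩)
    rw [hρ, Equiv.Perm.mul_apply]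
    congr 1
    set l := ((List.finRange (numCycles σ₁)).drop 1).map fun j => Equiv.swap (i ⟨0, hk⟩) (i j) with hl
    have key : ∀ (L : List (Equiv.Perm (Fin n))), (∀ p ∈ L, p x = x) → L.prod x = x := by
      intro L
      induction L with
      | nil => simp
      | cons a t ih =>
        intro hp
        rw [List.prod_cons, Equiv.Perm.mul_apply, ih (fun p hp' => hp p (List.mem_cons_of_mem a hp')),
          hp a List.mem_cons_self]
    refine (key l ?_).symm
    intro p hp
    simp only [hl, List.mem_map] at hp
    obtain ⟨j, _, rfl⟩ := hp
    exact Equiv.swap_apply_of_ne_of_ne (hx' _) (hx' _)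
  have h1 := lcs_le σ₁ ρ σ₂ D hfix
  have h2 := lcs_le ρ σ₁ σ₂ D (fun x hx => (hfix x hx).symm)
  rw [abs_sub_le_iff]
  omega
end

section
/- For any permutation σ of {1,…,n}, the number of fixed points of σ² satisfies card(fix(σ²)) ≥ 6·#(σ) − 3·card(fix(σ)) − 2n. -/
/-- The number of fixed points of a permutation of `{1,…,n}`. -/
def fixCount {n : ℕ} (σ : Equiv.Perm (Fin n)) : ℕ :=
  (Finset.univ.filter fun x => σ x = x).card

private lemma multiset_ineq (s : Multiset ℕ) (h : ∀ x ∈ s, 2 ≤ x) :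
    3 * Multiset.card s ≤ s.sum + s.count 2 := by
  induction s using Multiset.induction with
  | empty => simp
  | cons a s ih =>
    have ha : 2 ≤ a := h a (Multiset.mem_cons_self a s)
    have hih := ih (fun x hx => h x (Multiset.mem_cons_of_mem hx))
    simp only [Multiset.card_cons, Multiset.sum_cons, Multiset.count_cons]
    by_cases h2 : a = 2 <;> simp [h2] <;> omega

private lemma two_cycles_le {n : ℕ} (σ : Equiv.Perm (Fin n)) :
    2 * σ.cycleType.count 2 ≤
      (Finset.univ.filter fun x => σ x ≠ x ∧ σ (σ x) = x).card := by
  classical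
  set F2 : Finset (Equiv.Perm (Fin n)) :=
    σ.cycleFactorsFinset.filter (fun c => c.support.card = 2) with hF2
  have hcount : σ.cycleType.count 2 = F2.card := by
    rw [Equiv.Perm.cycleType_def, Multiset.count_map, hF2, Finset.card_def,
      Finset.filter_val]
    exact congrArg Multiset.card
      (Multiset.filter_congr (fun c _ => by simp [eq_comm, Function.comp]))
  -- supports of distinct factors are disjoint
  have hdisj : ∀ c ∈ F2, ∀ d ∈ F2, c ≠ d →
      Disjoint c.support d.support := by
    intro c hc d hd hcd
    exact Equiv.Perm.Disjoint.disjoint_support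
      ((Equiv.Perm.cycleFactorsFinset_pairwise_disjoint σ)
        (Finset.mem_filter.mp hc).1 (Finset.mem_filter.mp hd).1 hcd)
  have hsub : F2.biUnion Equiv.Perm.support ⊆
      Finset.univ.filter fun x => σ x ≠ x ∧ σ (σ x) = x := by
    intro x hx
    obtain ⟨c, hc, hxc⟩ := Finset.mem_biUnion.mp hx
    obtain ⟨hcmem, hcard⟩ := Finset.mem_filter.mp hc
    obtain ⟨_, happ⟩ := Equiv.Perm.mem_cycleFactorsFinset_iff.mp hcmem
    obtain ⟨a, b, hab, rfl⟩ := Equiv.Perm.card_support_eq_two.mp hcard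
    have hx2 : Equiv.swap a b x ∈ (Equiv.swap a b).support :=
      Equiv.Perm.apply_mem_support.mpr hxc
    have h1 : σ x = Equiv.swap a b x := (happ x hxc).symm
    have h2 : σ (Equiv.swap a b x) = Equiv.swap a b (Equiv.swap a b x) :=
      (happ _ hx2).symm
    refine Finset.mem_filter.mpr ⟨Finset.mem_univ _, ?_, ?_⟩
    · rw [h1]; exact Equiv.Perm.mem_support.mp hxc
    · rw [h1, h2, Equiv.swap_apply_self]
  calc 2 * σ.cycleType.count 2 = ∑ c ∈ F2, c.support.card := by
        rw [hcount, Finset.sum_congr rfl (fun c hc => (Finset.mem_filter.mp hc).2),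
          Finset.sum_const, smul_eq_mul, mul_comm]
      _ = (F2.biUnion Equiv.Perm.support).card := (Finset.card_biUnion hdisj).symm
      _ ≤ _ := Finset.card_le_card hsub

/-- For any permutation `σ` of `{1,…,n}`,
`card(fix(σ²)) ≥ 6·#(σ) − 3·card(fix(σ)) − 2n`. -/
theorem fixCount_sq_ge (n : ℕ) (σ : Equiv.Perm (Fin n)) :
    6 * (numCycles σ : ℤ) - 3 * (fixCount σ : ℤ) - 2 * (n : ℤ) ≤ (fixCount (σ * σ) : ℤ) := by
  classical
  set f := fixCount σ with hf
  set c := Multiset.card σ.cycleType with hc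
  set T : Finset (Fin n) := Finset.univ.filter fun x => σ x ≠ x ∧ σ (σ x) = x with hT
  -- support card + fixed points = n
  have hsupp : σ.support.card + f = n := by
    have := Finset.card_filter_add_card_filter_not
      (s := (Finset.univ : Finset (Fin n))) (p := fun x => σ x ≠ x)
    simp only [Finset.card_univ, Fintype.card_fin, not_not] at this
    rw [hf, fixCount]
    convert this using 2
    exact congrArg Finset.card (by ext x; simp)
  have hsum : σ.cycleType.sum = σ.support.card := Equiv.Perm.sum_cycleType σ
  have hms : 3 * c ≤ σ.cycleType.sum + σ.cycleType.count 2 :=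
    multiset_ineq _ (fun x hx => Equiv.Perm.two_le_of_mem_cycleType hx)
  have htwo : 2 * σ.cycleType.count 2 ≤ T.card := two_cycles_le σ
  -- fixCount (σ * σ) ≥ f + T.card
  have hfix2 : f + T.card ≤ fixCount (σ * σ) := by
    have hdisj : Disjoint (Finset.univ.filter fun x => σ x = x) T := by
      rw [Finset.disjoint_left]
      intro x hx hxT
      exact (Finset.mem_filter.mp hxT).2.1 (Finset.mem_filter.mp hx).2
    have hsub : (Finset.univ.filter fun x => σ x = x) ∪ T ⊆
        Finset.univ.filter fun x => (σ * σ) x = x := by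
      intro x hx
      refine Finset.mem_filter.mpr ⟨Finset.mem_univ _, ?_⟩
      rcases Finset.mem_union.mp hx with h | h
      · have := (Finset.mem_filter.mp h).2
        simp [Equiv.Perm.mul_apply, this]
      · have := (Finset.mem_filter.mp h).2.2
        simp [Equiv.Perm.mul_apply, this]
    calc f + T.card = ((Finset.univ.filter fun x => σ x = x) ∪ T).card :=
          (Finset.card_union_of_disjoint hdisj).symm
        _ ≤ _ := Finset.card_le_card hsub
  have hnum : numCycles σ = c + f := rfl
  rw [hnum]
  have key : 6 * c + 3 * f ≤ fixCount (σ * σ) + 2 * n := by omega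
  push_cast
  omega
end

section
/- Let n ≥ 2 and let σ₁, σ₂ be independent random permutations of {1,…,n}, each with distribution invariant under conjugation. Writing p₁ = P(σ₁(1)=1) and p₂ = P(σ₂(1)=1), one has P(σ₁⁻¹∘σ₂(1) = 1) = p₁p₂ + (1−p₁)(1−p₂)/(n−1). -/
/-- For a probability mass function `p` on permutations of `{1,…,n}`, the probability that the
permutation fixes the first element (`σ(1) = 1`). -/
noncomputable def probFixOne {n : ℕ} (p : Equiv.Perm (Fin n) → ℝ) : ℝ :=
  ∑ σ : Equiv.Perm (Fin n), if ∀ x : Fin n, (x : ℕ) = 0 → σ x = x then p σ else 0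

noncomputable def qfun {n : ℕ} (p : Equiv.Perm (Fin n) → ℝ) (z k : Fin n) : ℝ :=
  ∑ σ : Equiv.Perm (Fin n), if σ z = k then p σ else 0

lemma qfun_eq {n : ℕ} (p : Equiv.Perm (Fin n) → ℝ)
    (hinv : ∀ ρ σ : Equiv.Perm (Fin n), p (ρ * σ * ρ⁻¹) = p σ)
    (z k k' : Fin n) (hk : k ≠ z) (hk' : k' ≠ z) :
    qfun p z k = qfun p z k' := by
  unfold qfun
  refine Fintype.sum_equiv
    ((Equiv.mulRight (Equiv.swap k k')⁻¹).trans (Equiv.mulLeft (Equiv.swap k k'))) _ _ ?_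
  intro σ
  simp only [Equiv.trans_apply, Equiv.coe_mulRight, Equiv.coe_mulLeft]
  have hconj : Equiv.swap k k' * (σ * (Equiv.swap k k')⁻¹)
      = Equiv.swap k k' * σ * (Equiv.swap k k')⁻¹ := by group
  simp only [hconj, hinv]
  congr 1
  have hz : (Equiv.swap k k')⁻¹ z = z := by
    rw [Equiv.swap_inv]
    exact Equiv.swap_apply_of_ne_of_ne (Ne.symm hk) (Ne.symm hk')
  have happ : (Equiv.swap k k' * σ * (Equiv.swap k k')⁻¹) z = Equiv.swap k k' (σ z) := by
    rw [Equiv.Perm.mul_apply, Equiv.Perm.mul_apply, hz]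
  rw [happ, eq_iff_iff]
  constructor
  · intro h; rw [h]; exact Equiv.swap_apply_left k k'
  · intro h
    have h2 := congrArg (Equiv.swap k k') h
    rwa [Equiv.swap_apply_self, Equiv.swap_apply_right] at h2

/-- Let `n ≥ 2` and let `σ₁, σ₂` be independent random permutations of `{1,…,n}`, each
invariant under conjugation. With `p₁ = P(σ₁(1)=1)` and `p₂ = P(σ₂(1)=1)`, one has
`P(σ₁⁻¹∘σ₂(1)=1) = p₁p₂ + (1−p₁)(1−p₂)/(n−1)`. -/
theorem prob_inv_comp_fixes_one
    (n : ℕ) (hn : 2 ≤ n)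
    (p₁ p₂ : Equiv.Perm (Fin n) → ℝ)
    (h₁pos : ∀ σ, 0 ≤ p₁ σ) (h₁sum : ∑ σ : Equiv.Perm (Fin n), p₁ σ = 1)
    (h₁inv : ∀ ρ σ : Equiv.Perm (Fin n), p₁ (ρ * σ * ρ⁻¹) = p₁ σ)
    (h₂pos : ∀ σ, 0 ≤ p₂ σ) (h₂sum : ∑ σ : Equiv.Perm (Fin n), p₂ σ = 1)
    (h₂inv : ∀ ρ σ : Equiv.Perm (Fin n), p₂ (ρ * σ * ρ⁻¹) = p₂ σ) :
    (∑ σ₁ : Equiv.Perm (Fin n), ∑ σ₂ : Equiv.Perm (Fin n),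
        if (σ₁⁻¹ * σ₂) ⟨0, by omega⟩ = (⟨0, by omega⟩ : Fin n) then p₁ σ₁ * p₂ σ₂ else 0)
      = probFixOne p₁ * probFixOne p₂ +
        (1 - probFixOne p₁) * (1 - probFixOne p₂) / ((n : ℝ) - 1) := by
  have hnR : (n : ℝ) - 1 ≠ 0 := by
    have : (2:ℝ) ≤ (n:ℝ) := by exact_mod_cast hn
    linarith
  set z : Fin n := ⟨0, by omega⟩ with hzdef
  have hcard : ((Finset.univ.erase z).card : ℝ) = (n : ℝ) - 1 := by
    rw [Finset.card_erase_of_mem (Finset.mem_univ z), Finset.card_univ, Fintype.card_fin]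
    rw [Nat.cast_sub (by omega : 1 ≤ n)]
    norm_num
  have hpf : ∀ p : Equiv.Perm (Fin n) → ℝ, probFixOne p = qfun p z z := by
    intro p
    unfold probFixOne qfun
    refine Finset.sum_congr rfl fun σ _ => ?_
    congr 1
    simp only [eq_iff_iff]
    constructor
    · intro h; exact h z rfl
    · intro h x hx
      have hxz : x = z := Fin.ext hx
      rw [hxz]; exact h
  have key : ∀ (p : Equiv.Perm (Fin n) → ℝ),
      (∑ σ : Equiv.Perm (Fin n), p σ = 1) →
      (∀ ρ σ : Equiv.Perm (Fin n), p (ρ * σ * ρ⁻¹) = p σ) →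
      ∀ k : Fin n, k ≠ z → qfun p z k = (1 - qfun p z z) / ((n : ℝ) - 1) := by
    intro p hs hinv k hk
    have hsum : ∑ k' : Fin n, qfun p z k' = 1 := by
      unfold qfun
      rw [Finset.sum_comm]
      rw [← hs]
      refine Finset.sum_congr rfl fun σ _ => ?_
      simp [Finset.sum_ite_eq]
    have herase : ∑ k' ∈ Finset.univ.erase z, qfun p z k' = 1 - qfun p z z := by
      rw [Finset.sum_erase_eq_sub (Finset.mem_univ z), hsum]
    have hconst : ∑ k' ∈ Finset.univ.erase z, qfun p z k'
        = ((n : ℝ) - 1) * qfun p z k := by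
      rw [Finset.sum_congr rfl
        (fun k' hk' => qfun_eq p hinv z k' k (Finset.ne_of_mem_erase hk') hk)]
      rw [Finset.sum_const, nsmul_eq_mul, hcard]
    rw [eq_div_iff hnR]
    rw [hconst] at herase
    linarith
  simp only [hpf]
  have step1 : (∑ σ₁ : Equiv.Perm (Fin n), ∑ σ₂ : Equiv.Perm (Fin n),
        if (σ₁⁻¹ * σ₂) ⟨0, by omega⟩ = (⟨0, by omega⟩ : Fin n) then p₁ σ₁ * p₂ σ₂ else 0)
      = ∑ k : Fin n, qfun p₁ z k * qfun p₂ z k := by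
    have h1 : ∀ σ₁ : Equiv.Perm (Fin n),
        (∑ σ₂ : Equiv.Perm (Fin n),
          if (σ₁⁻¹ * σ₂) z = z then p₁ σ₁ * p₂ σ₂ else 0)
        = ∑ k : Fin n, if σ₁ z = k then p₁ σ₁ * qfun p₂ z k else 0 := by
      intro σ₁
      have h2 : (∑ σ₂ : Equiv.Perm (Fin n),
          if (σ₁⁻¹ * σ₂) z = z then p₁ σ₁ * p₂ σ₂ else 0)
          = p₁ σ₁ * qfun p₂ z (σ₁ z) := by
        unfold qfun
        rw [Finset.mul_sum]
        refine Finset.sum_congr rfl fun σ₂ _ => ?_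
        have hc : (σ₁⁻¹ * σ₂) z = z ↔ σ₂ z = σ₁ z := by
          constructor
          · intro h
            have := congrArg σ₁ h
            simpa [Equiv.Perm.mul_apply] using this
          · intro h
            simp [Equiv.Perm.mul_apply, h]
        rw [mul_ite, mul_zero, if_congr hc rfl rfl]
      rw [h2]
      simp [Finset.sum_ite_eq]
    calc (∑ σ₁ : Equiv.Perm (Fin n), ∑ σ₂ : Equiv.Perm (Fin n),
        if (σ₁⁻¹ * σ₂) z = z then p₁ σ₁ * p₂ σ₂ else 0)
        = ∑ σ₁ : Equiv.Perm (Fin n), ∑ k : Fin n,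
            if σ₁ z = k then p₁ σ₁ * qfun p₂ z k else 0 :=
          Finset.sum_congr rfl fun σ₁ _ => h1 σ₁
      _ = ∑ k : Fin n, qfun p₁ z k * qfun p₂ z k := by
          rw [Finset.sum_comm]
          refine Finset.sum_congr rfl fun k _ => ?_
          unfold qfun
          rw [Finset.sum_mul]
          refine Finset.sum_congr rfl fun σ₁ _ => ?_
          rw [ite_mul, zero_mul]
  rw [step1, ← Finset.add_sum_erase _ _ (Finset.mem_univ z)]
  congr 1
  rw [Finset.sum_congr rfl (fun k hk => by
    rw [key p₁ h₁sum h₁inv k (Finset.ne_of_mem_erase hk),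
        key p₂ h₂sum h₂inv k (Finset.ne_of_mem_erase hk)])]
  rw [Finset.sum_const, nsmul_eq_mul, hcard]
  field_simp
end
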